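/- Let Δ : A → A be an ℝ-linear map such that for every i ∈ J: (1) Δ(e_i) = −Δ(e_{σ(i)}), and (2) Δ(e_i)(k) = 0 for all k ∈ J with k ≠ i and k ≠ σ(i). Then Δ is a σ̃-derivation. -/

import Mathlib

theorem stmt9 (J : Type*) [Countable J] (σ : J ≃ J)
    (Δ : (J →₀ ℝ) →ₗ[ℝ] (J →₀ ℝ))
    (h1 : ∀ i : J, Δ (Finsupp.single i 1) = - Δ (Finsupp.single (σ i) 1))
    (h2 : ∀ i k : J, k ≠ i → k ≠ σ i → Δ (Finsupp.single i 1) k = 0) :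
    ∀ f g : J →₀ ℝ, Δ (f * g) = Finsupp.equivMapDomain σ f * Δ g + Δ f * g := by
  classical
  have smul1 : ∀ (i : J) (b : ℝ), Δ (Finsupp.single i b) = b • Δ (Finsupp.single i 1) := by
    intro i b
    rw [← map_smul, Finsupp.smul_single, smul_eq_mul, mul_one]
  have emd_add : ∀ (x y : J →₀ ℝ), Finsupp.equivMapDomain σ (x + y) =
      Finsupp.equivMapDomain σ x + Finsupp.equivMapDomain σ y := by
    intro x y; ext k; simp [Finsupp.equivMapDomain_apply]
  intro f g
  induction f using Finsupp.induction_linear with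
  | zero => simp
  | add f1 f2 hf1 hf2 =>
      simp only [add_mul, map_add, emd_add, hf1, hf2]
      abel
  | single i b =>
    induction g using Finsupp.induction_linear with
    | zero => simp
    | add g1 g2 hg1 hg2 =>
        simp only [mul_add, map_add, hg1, hg2]
        abel
    | single j d =>
        have hfix : σ i = i → ∀ m, Δ (Finsupp.single i 1) m = 0 := by
          intro h m
          have h' := h1 i
          rw [h] at h'
          have := DFunLike.congr_fun h' m
          simp only [Finsupp.neg_apply] at this
          linarith
        have hij : Finsupp.single i b * Finsupp.single j d =
            if i = j then Finsupp.single i (b * d) else 0 := by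
          ext m
          split_ifs with h
          · subst h
            simp only [Finsupp.mul_apply, Finsupp.single_apply]
            split_ifs <;> ring
          · simp only [Finsupp.mul_apply, Finsupp.single_apply, Finsupp.coe_zero, Pi.zero_apply]
            split_ifs with hmi hmj
            · exact absurd (hmi.trans hmj.symm) h
            · ring
            · ring
            · ring
        ext k
        rw [hij, Finsupp.equivMapDomain_single]
        rw [Finsupp.add_apply, Finsupp.mul_apply, Finsupp.mul_apply,
          smul1 j d, smul1 i b, Finsupp.smul_apply, Finsupp.smul_apply,
          Finsupp.single_apply, Finsupp.single_apply]
        simp only [smul_eq_mul]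
        by_cases hijeq : i = j
        · subst hijeq
          rw [if_pos rfl, smul1 i (b*d), Finsupp.smul_apply, smul_eq_mul]
          by_cases hk1 : σ i = k <;> by_cases hk2 : i = k
          · have h0 := hfix (hk1.trans hk2.symm) k
            rw [h0, if_pos hk1, if_pos hk2]; ring
          · rw [if_pos hk1, if_neg hk2]
            have : Δ (Finsupp.single i 1) k = Δ (Finsupp.single i 1) k := rfl
            ring
          · rw [if_neg hk1, if_pos hk2]; ring
          · rw [if_neg hk1, if_neg hk2, h2 i k (fun h => hk2 h.symm) (fun h => hk1 h.symm)]
            ring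
        · rw [if_neg hijeq]
          simp only [LinearMap.map_zero, Finsupp.coe_zero, Pi.zero_apply]
          by_cases hk1 : σ i = k <;> by_cases hk2 : j = k
          · have hji : j = σ i := hk2.trans hk1.symm
            have hD : ∀ m, Δ (Finsupp.single i 1) m = - Δ (Finsupp.single j 1) m := by
              intro m
              rw [hji]
              have := DFunLike.congr_fun (h1 i) m
              simpa using this
            rw [if_pos hk1, if_pos hk2, hD k]
            ring
          · rw [if_pos hk1, if_neg hk2]
            have h0 : Δ (Finsupp.single j 1) k = 0 := by
              apply h2 j k (fun h => hk2 h.symm)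
              intro h
              exact hijeq (σ.injective ((hk1.trans h) : σ i = σ j))
            rw [h0]; ring
          · rw [if_neg hk1, if_pos hk2]
            have h0 : Δ (Finsupp.single i 1) k = 0 := by
              apply h2 i k ?_ (fun h => hk1 h.symm)
              intro h
              exact hijeq (h.symm.trans hk2.symm)
            rw [h0]; ring
          · rw [if_neg hk1, if_neg hk2]; ring
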